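/- Let p be an odd prime and k with 0 ≤ k ≤ p/2, and let χ be the character of the irreducible 𝔖ₚ-representation of shape (p-k, k). Let b ∈ 𝔖ₚ be an involution that is a product of (p-1)/2 disjoint 2-cycles and one fixed point. Then χ(b) = 0 if k is odd, and χ(b) = C((p-1)/2, m) - C((p-1)/2, m-1) if k = 2m is even. -/

import Mathlib

/-- The character of the irreducible `𝔖ₚ`-representation (Specht module) indexed by
the two-row partition `(p-k, k)`.  By Young's rule the permutation module on
`k`-element subsets decomposes as `M^{(p-k,k)} = ⊕_{j ≤ k} S^{(p-j,j)}`, so this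
character equals `(#k-subsets fixed by g) - (#(k-1)-subsets fixed by g)`
(with the convention that for `k = 0` the second term is `0`). -/
def twoRowChar (p k : ℕ) (g : Equiv.Perm (Fin p)) : ℤ :=
  (((Finset.univ : Finset (Fin p)).powersetCard k).filter
      (fun S => S.image g = S)).card -
    (if k = 0 then 0 else
      (((Finset.univ : Finset (Fin p)).powersetCard (k - 1)).filter
        (fun S => S.image g = S)).card)


open Finset

section

variable {p : ℕ} {b : Equiv.Perm (Fin p)}

/-- The set of 2-element orbits of `b`. -/
def orbs (b : Equiv.Perm (Fin p)) : Finset (Finset (Fin p)) :=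
  (Finset.univ.filter fun x => b x ≠ x).image fun x => {x, b x}

lemma mem_orbs {o : Finset (Fin p)} :
    o ∈ orbs b ↔ ∃ x, b x ≠ x ∧ o = {x, b x} := by
  simp [orbs, eq_comm]

lemma orb_card {x : Fin p} (hx : b x ≠ x) : ({x, b x} : Finset (Fin p)).card = 2 := by
  rw [card_insert_of_notMem (by simp [Ne.symm hx]), card_singleton]

lemma orb_eq (hb : ∀ x, b (b x) = x) {x y : Fin p} (hx : x ∈ ({y, b y} : Finset (Fin p))) :
    ({x, b x} : Finset (Fin p)) = {y, b y} := by
  rcases mem_insert.mp hx with h | h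
  · subst h; rfl
  · rw [mem_singleton] at h; subst h; rw [hb y, pair_comm]

lemma orbs_eq_of_mem (hb : ∀ x, b (b x) = x) {o₁ o₂ : Finset (Fin p)}
    (h₁ : o₁ ∈ orbs b) (h₂ : o₂ ∈ orbs b)
    {z : Fin p} (hz₁ : z ∈ o₁) (hz₂ : z ∈ o₂) : o₁ = o₂ := by
  obtain ⟨x, hx, rfl⟩ := mem_orbs.mp h₁
  obtain ⟨y, hy, rfl⟩ := mem_orbs.mp h₂
  rw [← orb_eq hb hz₁, ← orb_eq hb hz₂]

lemma orbs_card_two {o : Finset (Fin p)} (ho : o ∈ orbs b) : o.card = 2 := by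
  obtain ⟨x, hx, rfl⟩ := mem_orbs.mp ho; exact orb_card hx

lemma orb_image (hb : ∀ x, b (b x) = x) {o : Finset (Fin p)} (ho : o ∈ orbs b) :
    o.image b = o := by
  obtain ⟨x, hx, rfl⟩ := mem_orbs.mp ho
  rw [image_insert, image_singleton, hb, pair_comm]

lemma biUnion_card (hb : ∀ x, b (b x) = x) {T : Finset (Finset (Fin p))}
    (hT : T ⊆ orbs b) : (T.biUnion id).card = 2 * T.card := by
  rw [card_biUnion]
  · rw [Finset.sum_congr rfl fun o ho => (orbs_card_two (hT ho) : (id o).card = 2),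
      Finset.sum_const, smul_eq_mul, mul_comm]
  · intro o₁ h₁ o₂ h₂ hne
    rw [Function.onFun, Finset.disjoint_left]
    intro z hz₁ hz₂
    exact hne (orbs_eq_of_mem hb (hT h₁) (hT h₂) hz₁ hz₂)

lemma mem_of_inv (hb : ∀ x, b (b x) = x) {S : Finset (Fin p)} (hS : S.image b = S)
    {x : Fin p} (hx : x ∈ S) : b x ∈ S := hS ▸ mem_image_of_mem b hx

lemma a_not_mem_orb (hb : ∀ x, b (b x) = x) {a : Fin p} (ha : ∀ x, b x = x ↔ x = a)
    {o : Finset (Fin p)} (ho : o ∈ orbs b) : a ∉ o := by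
  obtain ⟨x, hx, rfl⟩ := mem_orbs.mp ho
  intro hmem
  have haa : b a = a := (ha a).mpr rfl
  rcases mem_insert.mp hmem with h | h
  · exact hx ((ha x).mpr h.symm)
  · rw [mem_singleton] at h
    have hxa : x = a := by rw [← hb x, ← h, haa]
    exact hx (by rw [hxa, haa])

lemma dec_of_inv (hb : ∀ x, b (b x) = x) {a : Fin p} (ha : ∀ x, b x = x ↔ x = a)
    {S : Finset (Fin p)} (hS : S.image b = S) :
    S = ((orbs b).filter (· ⊆ S)).biUnion id ∪ (if a ∈ S then {a} else ∅) := by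
  ext z
  constructor
  · intro hz
    by_cases hza : z = a
    · subst hza
      exact mem_union_right _ (by simp [hz])
    · refine mem_union_left _ (mem_biUnion.mpr ⟨{z, b z}, ?_, mem_insert_self _ _⟩)
      refine mem_filter.mpr ⟨mem_orbs.mpr ⟨z, fun h => hza ((ha z).mp h), rfl⟩, ?_⟩
      exact insert_subset hz (singleton_subset_iff.mpr (mem_of_inv hb hS hz))
  · intro hz
    rcases mem_union.mp hz with h | h
    · obtain ⟨o, ho, hzo⟩ := mem_biUnion.mp h
      exact (mem_filter.mp ho).2 hzo
    · split_ifs at h with haS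
      · rw [mem_singleton] at h; exact h ▸ haS
      · exact absurd h (notMem_empty z)

lemma a_not_mem_biUnion (hb : ∀ x, b (b x) = x) {a : Fin p} (ha : ∀ x, b x = x ↔ x = a)
    {T : Finset (Finset (Fin p))} (hT : T ⊆ orbs b) : a ∉ T.biUnion id := by
  intro h
  obtain ⟨o, ho, hao⟩ := mem_biUnion.mp h
  exact a_not_mem_orb hb ha (hT ho) hao

lemma card_of_inv (hb : ∀ x, b (b x) = x) {a : Fin p} (ha : ∀ x, b x = x ↔ x = a)
    {S : Finset (Fin p)} (hS : S.image b = S) :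
    S.card = 2 * ((orbs b).filter (· ⊆ S)).card + (if a ∈ S then 1 else 0) := by
  conv_lhs => rw [dec_of_inv hb ha hS]
  rw [card_union_of_disjoint, biUnion_card hb (filter_subset _ _)]
  · congr 1
    split_ifs <;> simp
  · rw [Finset.disjoint_right]
    intro z hz
    split_ifs at hz with haS
    · rw [mem_singleton] at hz
      exact hz ▸ a_not_mem_biUnion hb ha (filter_subset _ _)
    · exact absurd hz (notMem_empty z)

/-- The number of `b`-invariant `k`-subsets is `C(#orbs, k/2)`. -/
lemma count_inv (hb : ∀ x, b (b x) = x) {a : Fin p} (ha : ∀ x, b x = x ↔ x = a) (k : ℕ) :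
    (((Finset.univ : Finset (Fin p)).powersetCard k).filter
      (fun S => S.image b = S)).card = (orbs b).card.choose (k / 2) := by
  rw [← card_powersetCard]
  apply card_bij' (fun S _ => (orbs b).filter (· ⊆ S))
    (fun T _ => T.biUnion id ∪ (if Odd k then {a} else ∅))
  · -- hi
    intro S hS
    rw [mem_filter, mem_powersetCard] at hS
    obtain ⟨⟨-, hcard⟩, hinv⟩ := hS
    rw [mem_powersetCard]
    refine ⟨filter_subset _ _, ?_⟩
    have h := card_of_inv hb ha hinv
    rw [hcard] at h
    split_ifs at h <;> omega
  · -- hj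
    intro T hT
    rw [mem_powersetCard] at hT
    obtain ⟨hTsub, hTcard⟩ := hT
    rw [mem_filter, mem_powersetCard]
    have hdis : Disjoint (T.biUnion id) (if Odd k then ({a} : Finset (Fin p)) else ∅) := by
      rw [Finset.disjoint_right]
      intro z hz
      split_ifs at hz with hok
      · rw [mem_singleton] at hz
        exact hz ▸ a_not_mem_biUnion hb ha hTsub
      · exact absurd hz (notMem_empty z)
    refine ⟨⟨subset_univ _, ?_⟩, ?_⟩
    · rw [card_union_of_disjoint hdis, biUnion_card hb hTsub, hTcard]
      by_cases hok : Odd k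
      · rw [if_pos hok, card_singleton]
        rw [Nat.odd_iff] at hok; omega
      · rw [if_neg hok, card_empty]
        rw [Nat.odd_iff, ← Ne, Nat.ne_iff_lt_or_gt] at hok; omega
    · rw [image_union, biUnion_image]
      congr 1
      · exact biUnion_congr rfl fun o ho => orb_image hb (hTsub ho)
      · split_ifs
        · rw [image_singleton, (ha a).mpr rfl]
        · exact image_empty _
  · -- left_inv
    intro S hS
    rw [mem_filter, mem_powersetCard] at hS
    obtain ⟨⟨-, hcard⟩, hinv⟩ := hS
    have hpar : Odd k ↔ a ∈ S := by
      have h := card_of_inv hb ha hinv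
      rw [hcard, Nat.odd_iff] at *
      split_ifs at h with h' <;> simp [h'] <;> omega
    rw [if_congr hpar rfl rfl]
    exact (dec_of_inv hb ha hinv).symm
  · -- right_inv
    intro T hT
    rw [mem_powersetCard] at hT
    obtain ⟨hTsub, hTcard⟩ := hT
    ext o
    rw [mem_filter]
    constructor
    · rintro ⟨ho, hsub⟩
      obtain ⟨x, hx, rfl⟩ := mem_orbs.mp ho
      have hxS : x ∈ T.biUnion id ∪ (if Odd k then {a} else ∅) := hsub (mem_insert_self _ _)
      have hxa : x ≠ a := fun h => hx ((ha x).mpr h)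
      have hxb : x ∈ T.biUnion id := by
        rcases mem_union.mp hxS with h | h
        · exact h
        · split_ifs at h with hok
          · rw [mem_singleton] at h; exact absurd h hxa
          · exact absurd h (notMem_empty x)
      obtain ⟨o', ho', hxo'⟩ := mem_biUnion.mp hxb
      rwa [orbs_eq_of_mem hb ho (hTsub ho') (mem_insert_self _ _) hxo']
    · intro hoT
      refine ⟨hTsub hoT, subset_trans ?_ subset_union_left⟩
      exact subset_biUnion_of_mem id hoT
end

section Main

lemma orbs_card {p : ℕ} {b : Equiv.Perm (Fin p)} (hb : ∀ x, b (b x) = x) {a : Fin p}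
    (ha : ∀ x, b x = x ↔ x = a) : 2 * (orbs b).card = p - 1 := by
  have hD : (Finset.univ.filter fun x : Fin p => b x ≠ x) = (orbs b).biUnion id := by
    ext z
    simp only [Finset.mem_filter, Finset.mem_univ, true_and, Finset.mem_biUnion, id]
    constructor
    · intro hz
      exact ⟨{z, b z}, mem_orbs.mpr ⟨z, hz, rfl⟩, Finset.mem_insert_self _ _⟩
    · rintro ⟨o, ho, hzo⟩
      obtain ⟨x, hx, rfl⟩ := mem_orbs.mp ho
      rcases Finset.mem_insert.mp hzo with h | h
      · exact h ▸ hx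
      · rw [Finset.mem_singleton] at h
        subst h
        rw [hb]
        exact fun h2 => hx h2.symm
  have hcard : (Finset.univ.filter fun x : Fin p => b x = x).card = 1 := by
    rw [Finset.card_eq_one]
    exact ⟨a, Finset.eq_singleton_iff_unique_mem.mpr
      ⟨Finset.mem_filter.mpr ⟨Finset.mem_univ _, (ha a).mpr rfl⟩,
       fun x hx => (ha x).mp (Finset.mem_filter.mp hx).2⟩⟩
  have h1 : (Finset.univ.filter fun x : Fin p => ¬ b x = x).card = p - 1 := by
    rw [Finset.filter_not, Finset.card_sdiff_of_subset (Finset.filter_subset _ _), hcard,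
      Finset.card_univ, Fintype.card_fin]
  rw [← biUnion_card hb (Finset.Subset.refl _), ← hD, h1]


/-- For `p` an odd prime, `0 ≤ k ≤ p/2`, and `b` an involution in `𝔖ₚ` that is a
product of `(p-1)/2` disjoint 2-cycles and one fixed point, the character of the
Specht module of shape `(p-k,k)` satisfies `χ(b) = 0` if `k` is odd and
`χ(b) = C((p-1)/2, m) - C((p-1)/2, m-1)` if `k = 2m` (with `C(n,-1) = 0`,
encoded by the `if m = 0` clause). -/
theorem twoRowChar_involution
    (p : ℕ) (hp : p.Prime) (hodd : Odd p) (k : ℕ) (hk : 2 * k ≤ p)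
    (b : Equiv.Perm (Fin p)) (hb : b * b = 1)
    (hfix : (Finset.univ.filter (fun x : Fin p => b x = x)).card = 1) :
    (Odd k → twoRowChar p k b = 0) ∧
      (∀ m : ℕ, k = 2 * m →
        twoRowChar p k b =
          (((p - 1) / 2).choose m : ℤ) -
            (if m = 0 then 0 else (((p - 1) / 2).choose (m - 1) : ℤ))) := by
  have hb' : ∀ x, b (b x) = x := fun x => by
    have : (b * b) x = (1 : Equiv.Perm (Fin p)) x := by rw [hb]
    simpa [Equiv.Perm.mul_apply] using this
  obtain ⟨a, hA⟩ := Finset.card_eq_one.mp hfix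
  have ha : ∀ x, b x = x ↔ x = a := by
    intro x
    constructor
    · intro h
      have : x ∈ Finset.univ.filter fun x : Fin p => b x = x :=
        Finset.mem_filter.mpr ⟨Finset.mem_univ _, h⟩
      rw [hA, Finset.mem_singleton] at this
      exact this
    · intro hxa
      rw [hxa]
      have : a ∈ Finset.univ.filter fun x : Fin p => b x = x := by
        rw [hA]; exact Finset.mem_singleton_self a
      exact (Finset.mem_filter.mp this).2
  have hoc : (orbs b).card = (p - 1) / 2 := by
    have := orbs_card hb' ha
    omega
  have hcount : ∀ j : ℕ, (((Finset.univ : Finset (Fin p)).powersetCard j).filter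
      (fun S => S.image b = S)).card = ((p - 1) / 2).choose (j / 2) := fun j => by
    rw [count_inv hb' ha j, hoc]
  constructor
  · intro hko
    have hk0 : k ≠ 0 := by rintro rfl; simp [Nat.odd_iff] at hko
    rw [twoRowChar, if_neg hk0, hcount, hcount]
    have : k / 2 = (k - 1) / 2 := by
      rw [Nat.odd_iff] at hko; omega
    rw [this, sub_self]
  · rintro m rfl
    by_cases hm : m = 0
    · subst hm
      rw [twoRowChar, if_pos rfl, if_pos rfl, hcount]
      norm_num
    · have h2m : 2 * m ≠ 0 := by omega
      rw [twoRowChar, if_neg h2m, if_neg hm, hcount, hcount]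
      have h1 : 2 * m / 2 = m := by omega
      have h2 : (2 * m - 1) / 2 = m - 1 := by omega
      rw [h1, h2]

end Main
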